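/- Fix a = (a_1, a_2) ∈ ℝ² and let Y ⊂ ℝ³ be the polytope with conormals η_1 = −e_1, η_2 = −e_2, η_3 = e_1 + e_2, η_4 = −e_3, η_5 = e_3 + a_1 e_1 + a_2 e_2 and support numbers κ_1 = κ_2 = κ_4 = 0, κ_3 = λ > 0, κ_5 = h with h > max(0, a_1, a_2)·λ. Let H = γ_1 η_1 + γ_2 η_2 + γ_3 η_3 with γ_1 + γ_2 + γ_3 = 0. Then ⟨H, c_Y⟩ = λ( γ_3 + λ(γ_1 a_1 + γ_2 a_2) / (12h − 4λ(a_1+a_2)) ); consequently this is an affine-linear function of (λ, h) if and only if γ_1 a_1 + γ_2 a_2 = 0. -/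

import Mathlib

open MeasureTheory

noncomputable section

/-- The polytope `Y_a(0,0,λ,0,h)` of Example 1.1. -/
def Ypoly (a₁ a₂ lam h : ℝ) : Set (Fin 3 → ℝ) :=
  {x | 0 ≤ x 0 ∧ 0 ≤ x 1 ∧ x 0 + x 1 ≤ lam ∧ 0 ≤ x 2 ∧ x 2 + a₁ * x 0 + a₂ * x 1 ≤ h}

/-- `⟨H, c_Y⟩` where `H = γ₁η₁ + γ₂η₂ + γ₃η₃ = (γ₃-γ₁)e₁ + (γ₃-γ₂)e₂`. -/
def Yval (a₁ a₂ γ₁ γ₂ γ₃ lam h : ℝ) : ℝ :=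
  (γ₃ - γ₁) * (⨍ x in Ypoly a₁ a₂ lam h, x) 0 + (γ₃ - γ₂) * (⨍ x in Ypoly a₁ a₂ lam h, x) 1

def Sset (a₁ a₂ lam h : ℝ) : Set (ℝ × ℝ × ℝ) :=
  {p | 0 ≤ p.1 ∧ 0 ≤ p.2.1 ∧ p.1 + p.2.1 ≤ lam ∧ 0 ≤ p.2.2 ∧ p.2.2 + a₁ * p.1 + a₂ * p.2.1 ≤ h}

lemma measurableSet_Sset (a₁ a₂ lam h : ℝ) : MeasurableSet (Sset a₁ a₂ lam h) := by
  have : Sset a₁ a₂ lam h =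
      {p : ℝ × ℝ × ℝ | 0 ≤ p.1} ∩ {p | 0 ≤ p.2.1} ∩ {p | p.1 + p.2.1 ≤ lam} ∩
        {p | 0 ≤ p.2.2} ∩ {p | p.2.2 + a₁ * p.1 + a₂ * p.2.1 ≤ h} := by
    ext p; simp [Sset]; tauto
  rw [this]
  refine ((((measurableSet_le (g := fun p : ℝ × ℝ × ℝ => p.1) (by fun_prop) (by fun_prop)).inter
    (measurableSet_le (g := fun p : ℝ × ℝ × ℝ => p.2.1) (by fun_prop) (by fun_prop))).inter
    (measurableSet_le (f := fun p : ℝ × ℝ × ℝ => p.1 + p.2.1) (by fun_prop) (by fun_prop))).inter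
    (measurableSet_le (g := fun p : ℝ × ℝ × ℝ => p.2.2) (by fun_prop) (by fun_prop))).inter
    (measurableSet_le (f := fun p : ℝ × ℝ × ℝ => p.2.2 + a₁ * p.1 + a₂ * p.2.1)
      (by fun_prop) (by fun_prop))

lemma Sset_subset (a₁ a₂ lam h : ℝ) (hl : 0 < lam) :
    Sset a₁ a₂ lam h ⊆ Set.Icc (0, 0, 0) (lam, lam, h + (|a₁| + |a₂|) * lam) := by
  rintro ⟨x, y, z⟩ ⟨h1, h2, h3, h4, h5⟩
  simp only [Set.mem_Icc, Prod.le_def]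
  have e1 : a₁ * x ≥ -(|a₁| * lam) := by nlinarith [neg_abs_le a₁, abs_nonneg a₁]
  have e2 : a₂ * y ≥ -(|a₂| * lam) := by nlinarith [neg_abs_le a₂, abs_nonneg a₂]
  exact ⟨⟨h1, h2, h4⟩, ⟨by linarith, by linarith, by linarith⟩⟩

lemma integrable_ind (a₁ a₂ lam h : ℝ) (hl : 0 < lam) (F : ℝ × ℝ × ℝ → ℝ) (hF : Continuous F) :
    Integrable ((Sset a₁ a₂ lam h).indicator F) := by
  rw [integrable_indicator_iff (measurableSet_Sset a₁ a₂ lam h)]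
  exact (hF.continuousOn.integrableOn_compact isCompact_Icc).mono_set (Sset_subset a₁ a₂ lam h hl)

lemma hcle (a₁ a₂ lam h : ℝ) (hh : max 0 (max a₁ a₂) * lam < h) :
    ∀ x y : ℝ, 0 ≤ x → 0 ≤ y → x + y ≤ lam → 0 ≤ h - a₁ * x - a₂ * y := by
  intro x y hx hy hxy
  have hM : 0 ≤ max 0 (max a₁ a₂) := le_max_left _ _
  have h1 : a₁ * x ≤ max 0 (max a₁ a₂) * x :=
    mul_le_mul_of_nonneg_right ((le_max_left a₁ a₂).trans (le_max_right _ _)) hx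
  have h2 : a₂ * y ≤ max 0 (max a₂ a₁) * y :=
    mul_le_mul_of_nonneg_right ((le_max_left a₂ a₁).trans (le_max_right _ _)) hy
  rw [max_comm a₂ a₁] at h2
  nlinarith [mul_le_mul_of_nonneg_left hxy hM]

lemma section_eq (a₁ a₂ lam h : ℝ) (f : ℝ → ℝ → ℝ) (x : ℝ) :
    (fun q : ℝ × ℝ => (Sset a₁ a₂ lam h).indicator (fun p => f p.1 p.2.1) (x, q))
      = (Prod.mk x ⁻¹' Sset a₁ a₂ lam h).indicator (fun q : ℝ × ℝ => f x q.1) := by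
  funext q
  by_cases hq : q ∈ Prod.mk x ⁻¹' Sset a₁ a₂ lam h
  · exact (Set.indicator_of_mem (show (x, q) ∈ Sset a₁ a₂ lam h from hq)
      (fun p => f p.1 p.2.1)).trans
      (Set.indicator_of_mem hq (fun q : ℝ × ℝ => f x q.1)).symm
  · exact (Set.indicator_of_notMem (show (x, q) ∉ Sset a₁ a₂ lam h from hq)
      (fun p => f p.1 p.2.1)).trans
      (Set.indicator_of_notMem hq (fun q : ℝ × ℝ => f x q.1)).symm

lemma section_integrable (a₁ a₂ lam h : ℝ) (hl : 0 < lam) (f : ℝ → ℝ → ℝ)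
    (hf : Continuous fun p : ℝ × ℝ => f p.1 p.2) (x : ℝ) :
    Integrable (fun q : ℝ × ℝ => (Sset a₁ a₂ lam h).indicator (fun p => f p.1 p.2.1) (x, q)) := by
  rw [section_eq]
  have hm : MeasurableSet (Prod.mk x ⁻¹' Sset a₁ a₂ lam h) :=
    (measurableSet_Sset a₁ a₂ lam h).preimage measurable_prodMk_left
  rw [integrable_indicator_iff hm]
  have hsub : Prod.mk x ⁻¹' Sset a₁ a₂ lam h
      ⊆ Set.Icc ((0 : ℝ), (0 : ℝ)) (lam, h + (|a₁| + |a₂|) * lam) := by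
    rintro ⟨y, z⟩ ⟨h1, h2, h3, h4, h5⟩
    simp only [Set.mem_Icc, Prod.le_def]
    have e1 : a₁ * x ≥ -(|a₁| * lam) := by nlinarith [neg_abs_le a₁, abs_nonneg a₁]
    have e2 : a₂ * y ≥ -(|a₂| * lam) := by nlinarith [neg_abs_le a₂, abs_nonneg a₂]
    exact ⟨⟨h2, h4⟩, ⟨by linarith, by linarith⟩⟩
  have hc : Continuous fun q : ℝ × ℝ => f x q.1 := by
    have : (fun q : ℝ × ℝ => f x q.1) = (fun p : ℝ × ℝ => f p.1 p.2) ∘ (fun q => (x, q.1)) := rfl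
    rw [this]; exact hf.comp (by fun_prop)
  exact (hc.continuousOn.integrableOn_compact isCompact_Icc).mono_set hsub

lemma fubini_S (a₁ a₂ lam h : ℝ) (hl : 0 < lam) (hh : max 0 (max a₁ a₂) * lam < h)
    (f : ℝ → ℝ → ℝ) (hf : Continuous fun p : ℝ × ℝ => f p.1 p.2) :
    ∫ p in Sset a₁ a₂ lam h, f p.1 p.2.1
      = ∫ x in (0:ℝ)..lam, ∫ y in (0:ℝ)..(lam - x), f x y * (h - a₁ * x - a₂ * y) := by
  have hFc : Continuous fun p : ℝ × ℝ × ℝ => f p.1 p.2.1 := by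
    have : (fun p : ℝ × ℝ × ℝ => f p.1 p.2.1)
        = (fun p : ℝ × ℝ => f p.1 p.2) ∘ (fun p : ℝ × ℝ × ℝ => (p.1, p.2.1)) := rfl
    rw [this]; exact hf.comp (by fun_prop)
  -- innermost integral
  have inner2 : ∀ x y : ℝ,
      (∫ z, (Sset a₁ a₂ lam h).indicator (fun p => f p.1 p.2.1) (x, (y, z)))
        = if 0 ≤ x ∧ 0 ≤ y ∧ x + y ≤ lam then f x y * (h - a₁ * x - a₂ * y) else 0 := by
    intro x y
    have hrep : (fun z : ℝ => (Sset a₁ a₂ lam h).indicator (fun p => f p.1 p.2.1) (x, (y, z)))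
        = Set.indicator {z : ℝ | 0 ≤ x ∧ 0 ≤ y ∧ x + y ≤ lam ∧ 0 ≤ z ∧ z + a₁ * x + a₂ * y ≤ h}
            (fun _ => f x y) := by
      funext z
      by_cases hz : (x, (y, z)) ∈ Sset a₁ a₂ lam h
      · exact (Set.indicator_of_mem hz (fun p => f p.1 p.2.1)).trans
          (Set.indicator_of_mem
            (show z ∈ {z : ℝ | 0 ≤ x ∧ 0 ≤ y ∧ x + y ≤ lam ∧ 0 ≤ z ∧ z + a₁ * x + a₂ * y ≤ h}
              from hz) (fun _ => f x y)).symm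
      · exact (Set.indicator_of_notMem hz (fun p => f p.1 p.2.1)).trans
          (Set.indicator_of_notMem
            (show z ∉ {z : ℝ | 0 ≤ x ∧ 0 ≤ y ∧ x + y ≤ lam ∧ 0 ≤ z ∧ z + a₁ * x + a₂ * y ≤ h}
              from hz) (fun _ => f x y)).symm
    rw [hrep]
    by_cases hxy : 0 ≤ x ∧ 0 ≤ y ∧ x + y ≤ lam
    · have hset : {z : ℝ | 0 ≤ x ∧ 0 ≤ y ∧ x + y ≤ lam ∧ 0 ≤ z ∧ z + a₁ * x + a₂ * y ≤ h}
          = Set.Icc 0 (h - a₁ * x - a₂ * y) := by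
        ext z
        simp only [Set.mem_setOf_eq, Set.mem_Icc, hxy.1, hxy.2.1, hxy.2.2, true_and]
        constructor
        · rintro ⟨hz1, hz2⟩; exact ⟨hz1, by linarith⟩
        · rintro ⟨hz1, hz2⟩; exact ⟨hz1, by linarith⟩
      rw [hset, integral_indicator measurableSet_Icc, setIntegral_const, Real.volume_real_Icc,
        sub_zero, max_eq_left (hcle a₁ a₂ lam h hh x y hxy.1 hxy.2.1 hxy.2.2),
        smul_eq_mul, if_pos hxy, mul_comm]
    · have hset : {z : ℝ | 0 ≤ x ∧ 0 ≤ y ∧ x + y ≤ lam ∧ 0 ≤ z ∧ z + a₁ * x + a₂ * y ≤ h}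
          = (∅ : Set ℝ) := by
        ext z; simp only [Set.mem_setOf_eq, Set.mem_empty_iff_false, iff_false]
        rintro ⟨hz1, hz2, hz3, _⟩; exact hxy ⟨hz1, hz2, hz3⟩
      rw [hset, Set.indicator_empty, integral_zero, if_neg hxy]
  -- middle
  have inner1 : ∀ x : ℝ,
      (∫ q : ℝ × ℝ, (Sset a₁ a₂ lam h).indicator (fun p => f p.1 p.2.1) (x, q))
        = Set.indicator (Set.Icc 0 lam)
            (fun x => ∫ y in (0:ℝ)..(lam - x), f x y * (h - a₁ * x - a₂ * y)) x := by
    intro x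
    rw [Measure.volume_eq_prod, integral_prod _ (by
      rw [← Measure.volume_eq_prod]; exact section_integrable a₁ a₂ lam h hl f hf x)]
    simp_rw [inner2 x]
    by_cases hx : (0:ℝ) ≤ x ∧ x ≤ lam
    · rw [Set.indicator_of_mem (Set.mem_Icc.2 hx)]
      have hrep : (fun y => if 0 ≤ x ∧ 0 ≤ y ∧ x + y ≤ lam
            then f x y * (h - a₁ * x - a₂ * y) else 0)
          = Set.indicator (Set.Icc 0 (lam - x)) (fun y => f x y * (h - a₁ * x - a₂ * y)) := by
        funext y
        by_cases hy : y ∈ Set.Icc 0 (lam - x)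
        · rw [Set.indicator_of_mem hy,
            if_pos ⟨hx.1, (Set.mem_Icc.1 hy).1, by linarith [(Set.mem_Icc.1 hy).2]⟩]
        · rw [Set.indicator_of_notMem hy, if_neg]
          rintro ⟨-, hc2, hc3⟩; exact hy (Set.mem_Icc.2 ⟨hc2, by linarith⟩)
      rw [hrep, integral_indicator measurableSet_Icc, integral_Icc_eq_integral_Ioc,
        ← intervalIntegral.integral_of_le (by linarith : (0:ℝ) ≤ lam - x)]
    · rw [Set.indicator_of_notMem (by simpa [Set.mem_Icc] using hx)]
      rcases not_and_or.1 hx with hx' | hx' <;> push_neg at hx'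
      · have : (fun y => if 0 ≤ x ∧ 0 ≤ y ∧ x + y ≤ lam
              then f x y * (h - a₁ * x - a₂ * y) else 0) = fun _ => (0:ℝ) :=
          funext fun y => if_neg (fun hc => absurd hc.1 (not_le.2 hx'))
        rw [this, integral_zero]
      · have : (fun y => if 0 ≤ x ∧ 0 ≤ y ∧ x + y ≤ lam
              then f x y * (h - a₁ * x - a₂ * y) else 0) = fun _ => (0:ℝ) := by
          funext y; refine if_neg ?_; rintro ⟨hc1, hc2, hc3⟩; linarith
        rw [this, integral_zero]
  rw [← integral_indicator (measurableSet_Sset a₁ a₂ lam h), Measure.volume_eq_prod,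
    integral_prod _ (by rw [← Measure.volume_eq_prod]; exact integrable_ind a₁ a₂ lam h hl _ hFc)]
  rw [show (fun x => ∫ q : ℝ × ℝ, (Sset a₁ a₂ lam h).indicator (fun p => f p.1 p.2.1) (x, q))
      = Set.indicator (Set.Icc 0 lam)
          (fun x => ∫ y in (0:ℝ)..(lam - x), f x y * (h - a₁ * x - a₂ * y)) from funext inner1]
  rw [integral_indicator measurableSet_Icc, integral_Icc_eq_integral_Ioc,
    ← intervalIntegral.integral_of_le hl.le]

lemma intPoly (c₀ c₁ c₂ c₃ b : ℝ) :
    ∫ t in (0:ℝ)..b, (c₀ + c₁*t + c₂*t^2 + c₃*t^3)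
      = c₀*b + c₁*b^2/2 + c₂*b^3/3 + c₃*b^4/4 := by
  have hd : ∀ t ∈ Set.uIcc (0:ℝ) b, HasDerivAt
      (fun t : ℝ => c₀*t + c₁*t^2/2 + c₂*t^3/3 + c₃*t^4/4)
      (c₀ + c₁*t + c₂*t^2 + c₃*t^3) t := by
    intro t _
    have h1 := ((hasDerivAt_pow 2 t).const_mul c₁).div_const 2
    have h2 := ((hasDerivAt_pow 3 t).const_mul c₂).div_const 3
    have h3 := ((hasDerivAt_pow 4 t).const_mul c₃).div_const 4
    have h0 := (hasDerivAt_id t).const_mul c₀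
    exact (((h0.add h1).add h2).add h3).congr_deriv (by norm_num; ring)
  have := intervalIntegral.integral_eq_sub_of_hasDerivAt hd (by
    apply Continuous.intervalIntegrable; continuity)
  simpa using this

lemma S_vol (a₁ a₂ lam h : ℝ) (hl : 0 < lam) (hh : max 0 (max a₁ a₂) * lam < h) :
    ∫ p in Sset a₁ a₂ lam h, (1:ℝ)
      = h*lam^2/2 - (a₁+a₂)*lam^3/6 := by
  have := fubini_S a₁ a₂ lam h hl hh (fun _ _ => 1) (by continuity)
  rw [this]
  have h1 : ∀ x ∈ Set.uIcc (0:ℝ) lam,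
      (∫ y in (0:ℝ)..(lam - x), (1:ℝ) * (h - a₁ * x - a₂ * y))
        = (h*lam - a₂*lam^2/2) + (-h - a₁*lam + a₂*lam)*x + (a₁ - a₂/2)*x^2 + 0*x^3 := by
    intro x _
    calc (∫ y in (0:ℝ)..(lam - x), (1:ℝ) * (h - a₁ * x - a₂ * y))
        = ∫ y in (0:ℝ)..(lam - x), ((h - a₁*x) + (-a₂)*y + 0*y^2 + 0*y^3) :=
          intervalIntegral.integral_congr fun y _ => by ring
      _ = (h - a₁*x)*(lam-x) + (-a₂)*(lam-x)^2/2 + 0*(lam-x)^3/3 + 0*(lam-x)^4/4 :=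
          intPoly _ _ _ _ _
      _ = _ := by ring
  rw [intervalIntegral.integral_congr h1, intPoly]
  ring

lemma S_m0 (a₁ a₂ lam h : ℝ) (hl : 0 < lam) (hh : max 0 (max a₁ a₂) * lam < h) :
    ∫ p in Sset a₁ a₂ lam h, p.1
      = h*lam^3/6 - a₁*lam^4/12 - a₂*lam^4/24 := by
  have := fubini_S a₁ a₂ lam h hl hh (fun x _ => x) (by continuity)
  rw [show (fun p : ℝ × ℝ × ℝ => p.1) = fun p : ℝ × ℝ × ℝ => (fun x _ => x : ℝ → ℝ → ℝ) p.1 p.2.1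
    from rfl, this]
  have h1 : ∀ x ∈ Set.uIcc (0:ℝ) lam,
      (∫ y in (0:ℝ)..(lam - x), x * (h - a₁ * x - a₂ * y))
        = 0 + (h*lam - a₂*lam^2/2)*x + (-h - a₁*lam + a₂*lam)*x^2 + (a₁ - a₂/2)*x^3 := by
    intro x _
    calc (∫ y in (0:ℝ)..(lam - x), x * (h - a₁ * x - a₂ * y))
        = ∫ y in (0:ℝ)..(lam - x), ((x*h - a₁*x^2) + (-(a₂*x))*y + 0*y^2 + 0*y^3) :=
          intervalIntegral.integral_congr fun y _ => by ring
      _ = (x*h - a₁*x^2)*(lam-x) + (-(a₂*x))*(lam-x)^2/2 + 0*(lam-x)^3/3 + 0*(lam-x)^4/4 :=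
          intPoly _ _ _ _ _
      _ = _ := by ring
  rw [intervalIntegral.integral_congr h1, intPoly]
  ring

lemma S_m1 (a₁ a₂ lam h : ℝ) (hl : 0 < lam) (hh : max 0 (max a₁ a₂) * lam < h) :
    ∫ p in Sset a₁ a₂ lam h, p.2.1
      = h*lam^3/6 - a₂*lam^4/12 - a₁*lam^4/24 := by
  have := fubini_S a₁ a₂ lam h hl hh (fun _ y => y) (by continuity)
  rw [show (fun p : ℝ × ℝ × ℝ => p.2.1)
      = fun p : ℝ × ℝ × ℝ => (fun _ y => y : ℝ → ℝ → ℝ) p.1 p.2.1 from rfl, this]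
  have h1 : ∀ x ∈ Set.uIcc (0:ℝ) lam,
      (∫ y in (0:ℝ)..(lam - x), y * (h - a₁ * x - a₂ * y))
        = (h*lam^2/2 - a₂*lam^3/3) + (-(h*lam) - a₁*lam^2/2 + a₂*lam^2)*x
            + (h/2 + a₁*lam - a₂*lam)*x^2 + (-a₁/2 + a₂/3)*x^3 := by
    intro x _
    calc (∫ y in (0:ℝ)..(lam - x), y * (h - a₁ * x - a₂ * y))
        = ∫ y in (0:ℝ)..(lam - x), (0 + (h - a₁*x)*y + (-a₂)*y^2 + 0*y^3) :=
          intervalIntegral.integral_congr fun y _ => by ring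
      _ = 0*(lam-x) + (h - a₁*x)*(lam-x)^2/2 + (-a₂)*(lam-x)^3/3 + 0*(lam-x)^4/4 :=
          intPoly _ _ _ _ _
      _ = _ := by ring
  rw [intervalIntegral.integral_congr h1, intPoly]
  ring

def e3 : (Fin 3 → ℝ) ≃ᵐ ℝ × ℝ × ℝ :=
  (MeasurableEquiv.piFinSuccAbove (fun _ => ℝ) 0).trans
    ((MeasurableEquiv.refl ℝ).prodCongr MeasurableEquiv.finTwoArrow)

lemma e3_mp : MeasurePreserving e3 :=
  (volume_preserving_piFinSuccAbove (fun _ => ℝ) 0).trans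
    ((MeasurePreserving.id _).prod (volume_preserving_finTwoArrow ℝ))

lemma Ypoly_eq (a₁ a₂ lam h : ℝ) : Ypoly a₁ a₂ lam h = e3 ⁻¹' Sset a₁ a₂ lam h := rfl

lemma basic_bounds (a₁ a₂ lam h : ℝ) (hl : 0 < lam) (hh : max 0 (max a₁ a₂) * lam < h) :
    a₁ * lam < h ∧ a₂ * lam < h ∧ 0 < h := by
  have hM : (0:ℝ) ≤ max 0 (max a₁ a₂) := le_max_left _ _
  have h1 : a₁ * lam ≤ max 0 (max a₁ a₂) * lam :=
    mul_le_mul_of_nonneg_right ((le_max_left a₁ a₂).trans (le_max_right _ _)) hl.le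
  have h2 : a₂ * lam ≤ max 0 (max a₁ a₂) * lam :=
    mul_le_mul_of_nonneg_right ((le_max_right a₁ a₂).trans (le_max_right _ _)) hl.le
  have h0 : (0:ℝ) ≤ max 0 (max a₁ a₂) * lam := mul_nonneg hM hl.le
  exact ⟨lt_of_le_of_lt h1 hh, lt_of_le_of_lt h2 hh, lt_of_le_of_lt h0 hh⟩

lemma vol_toReal (a₁ a₂ lam h : ℝ) (hl : 0 < lam) (hh : max 0 (max a₁ a₂) * lam < h) :
    (volume (Ypoly a₁ a₂ lam h)).toReal = h*lam^2/2 - (a₁+a₂)*lam^3/6 := by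
  rw [Ypoly_eq, e3_mp.measure_preimage (measurableSet_Sset a₁ a₂ lam h).nullMeasurableSet]
  have h2 := setIntegral_const (s := Sset a₁ a₂ lam h) (μ := volume) (1 : ℝ)
  rw [S_vol a₁ a₂ lam h hl hh, smul_eq_mul, mul_one] at h2
  exact h2.symm

lemma integrableOn_id_Y (a₁ a₂ lam h : ℝ) (hl : 0 < lam) :
    IntegrableOn (fun x : Fin 3 → ℝ => x) (Ypoly a₁ a₂ lam h) := by
  have hsub : Ypoly a₁ a₂ lam h
      ⊆ Set.Icc (0 : Fin 3 → ℝ) ![lam, lam, h + (|a₁| + |a₂|) * lam] := by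
    rintro x ⟨h1, h2, h3, h4, h5⟩
    have e1 : a₁ * x 0 ≥ -(|a₁| * lam) := by nlinarith [neg_abs_le a₁, abs_nonneg a₁]
    have e2 : a₂ * x 1 ≥ -(|a₂| * lam) := by nlinarith [neg_abs_le a₂, abs_nonneg a₂]
    rw [Set.mem_Icc]
    constructor <;> intro i <;> fin_cases i <;>
      simp [Matrix.cons_val_zero, Matrix.cons_val_one] <;> linarith
  exact (continuous_id.continuousOn.integrableOn_compact isCompact_Icc).mono_set hsub

lemma centroid_coords (a₁ a₂ lam h : ℝ) (hl : 0 < lam) (hh : max 0 (max a₁ a₂) * lam < h) :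
    (⨍ x in Ypoly a₁ a₂ lam h, x) 0
      = (h*lam^2/2 - (a₁+a₂)*lam^3/6)⁻¹ * (h*lam^3/6 - a₁*lam^4/12 - a₂*lam^4/24)
    ∧ (⨍ x in Ypoly a₁ a₂ lam h, x) 1
      = (h*lam^2/2 - (a₁+a₂)*lam^3/6)⁻¹ * (h*lam^3/6 - a₂*lam^4/12 - a₁*lam^4/24) := by
  have hint := integrableOn_id_Y a₁ a₂ lam h hl
  have happ : ∀ i : Fin 3, (∫ x in Ypoly a₁ a₂ lam h, x) i
      = ∫ x in Ypoly a₁ a₂ lam h, x i := fun i =>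
    (ContinuousLinearMap.integral_comp_comm
      (ContinuousLinearMap.proj (R := ℝ) (φ := fun _ : Fin 3 => ℝ) i) hint).symm
  have tr0 : (∫ x in Ypoly a₁ a₂ lam h, x 0) = ∫ p in Sset a₁ a₂ lam h, p.1 := by
    rw [Ypoly_eq]
    exact e3_mp.setIntegral_preimage_emb e3.measurableEmbedding (fun p => p.1) _
  have tr1 : (∫ x in Ypoly a₁ a₂ lam h, x 1) = ∫ p in Sset a₁ a₂ lam h, p.2.1 := by
    rw [Ypoly_eq]
    exact e3_mp.setIntegral_preimage_emb e3.measurableEmbedding (fun p => p.2.1) _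
  constructor
  · rw [setAverage_eq, Pi.smul_apply, smul_eq_mul, measureReal_def, vol_toReal a₁ a₂ lam h hl hh, happ 0, tr0,
      S_m0 a₁ a₂ lam h hl hh]
  · rw [setAverage_eq, Pi.smul_apply, smul_eq_mul, measureReal_def, vol_toReal a₁ a₂ lam h hl hh, happ 1, tr1,
      S_m1 a₁ a₂ lam h hl hh]

lemma Yval_formula (a₁ a₂ γ₁ γ₂ γ₃ : ℝ) (hγ : γ₁ + γ₂ + γ₃ = 0) (lam h : ℝ)
    (hl : 0 < lam) (hh : max 0 (max a₁ a₂) * lam < h) :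
    Yval a₁ a₂ γ₁ γ₂ γ₃ lam h
      = lam * (γ₃ + lam * (γ₁ * a₁ + γ₂ * a₂) / (12 * h - 4 * lam * (a₁ + a₂))) := by
  unfold Yval
  obtain ⟨hc0, hc1⟩ := centroid_coords a₁ a₂ lam h hl hh
  have hVD : h*lam^2/2 - (a₁+a₂)*lam^3/6 = lam^2*(12*h - 4*lam*(a₁+a₂))/24 := by ring
  rw [hc0, hc1, hVD]
  obtain ⟨hb1, hb2, hb3⟩ := basic_bounds a₁ a₂ lam h hl hh
  have hVpos : 0 < h*lam^2/2 - (a₁+a₂)*lam^3/6 := by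
    nlinarith [mul_pos (sub_pos.2 hb1) (mul_pos hl hl), mul_pos (sub_pos.2 hb2) (mul_pos hl hl),
      mul_pos hb3 (mul_pos hl hl)]
  have hDpos : 0 < 12*h - 4*lam*(a₁+a₂) := by nlinarith
  have h2 : γ₂ = -γ₁ - γ₃ := by linarith
  subst h2
  have hV : h*lam^2/2 - (a₁+a₂)*lam^3/6 ≠ 0 := ne_of_gt hVpos
  have hD : 12*h - 4*lam*(a₁+a₂) ≠ 0 := ne_of_gt hDpos
  generalize hDD : 12*h - 4*lam*(a₁+a₂) = D at hD ⊢
  have hh : h = (D + 4*lam*(a₁+a₂))/12 := by linarith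
  subst hh
  field_simp [hD, hl.ne']
  ring

/-- The value of `H = γ₁η₁+γ₂η₂+γ₃η₃` (with `γ₁+γ₂+γ₃ = 0`) on the centroid of `Y` is
`λ(γ₃ + λ(γ₁a₁+γ₂a₂)/(12h − 4λ(a₁+a₂)))`; consequently it is an affine-linear function of
`(λ,h)` iff `γ₁a₁ + γ₂a₂ = 0`. -/
theorem stmt18 (a₁ a₂ γ₁ γ₂ γ₃ : ℝ) (hγ : γ₁ + γ₂ + γ₃ = 0) :
    (∀ lam h : ℝ, 0 < lam → max 0 (max a₁ a₂) * lam < h →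
      Yval a₁ a₂ γ₁ γ₂ γ₃ lam h
        = lam * (γ₃ + lam * (γ₁ * a₁ + γ₂ * a₂) / (12 * h - 4 * lam * (a₁ + a₂)))) ∧
    ((∃ A B C : ℝ, ∀ lam h : ℝ, 0 < lam → max 0 (max a₁ a₂) * lam < h →
        Yval a₁ a₂ γ₁ γ₂ γ₃ lam h = A * lam + B * h + C) ↔ γ₁ * a₁ + γ₂ * a₂ = 0) := by
  have part1 : ∀ lam h : ℝ, 0 < lam → max 0 (max a₁ a₂) * lam < h →
      Yval a₁ a₂ γ₁ γ₂ γ₃ lam h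
        = lam * (γ₃ + lam * (γ₁ * a₁ + γ₂ * a₂) / (12 * h - 4 * lam * (a₁ + a₂))) :=
    fun lam h hl hh => Yval_formula a₁ a₂ γ₁ γ₂ γ₃ hγ lam h hl hh
  refine ⟨part1, ?_, ?_⟩
  · rintro ⟨A, B, C, hABC⟩
    set T : ℝ := 12 * max 0 (max a₁ a₂) + 12 * |a₁ + a₂| + 1 with hT
    have hM0 : (0:ℝ) ≤ max 0 (max a₁ a₂) := le_max_left _ _
    have habs1 := le_abs_self (a₁ + a₂)
    have habs2 := neg_abs_le (a₁ + a₂)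
    have habs3 := abs_nonneg (a₁ + a₂)
    have hTpos : 0 < T := by rw [hT]; linarith
    have key : ∀ j : ℝ, 0 ≤ j →
        γ₃ + (γ₁ * a₁ + γ₂ * a₂) / (T + j)
          = A * 1 + B * ((4 * (a₁ + a₂) + (T + j)) / 12) + C := by
      intro j hj
      have hcond : max 0 (max a₁ a₂) * 1 < (4 * (a₁ + a₂) + (T + j)) / 12 := by
        rw [hT]; linarith
      have h2 := hABC 1 _ one_pos hcond
      rw [part1 1 _ one_pos hcond] at h2
      have hD : 12 * ((4 * (a₁ + a₂) + (T + j)) / 12) - 4 * 1 * (a₁ + a₂) = T + j := by ring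
      rw [hD] at h2
      linear_combination h2
    have e0 := key 0 le_rfl
    have e1 := key 1 zero_le_one
    have e2 := key 2 (by norm_num)
    have hT0 : T + 0 ≠ 0 := by positivity
    have hT1 : T + 1 ≠ 0 := by positivity
    have hT2 : T + 2 ≠ 0 := by positivity
    have F : (γ₁ * a₁ + γ₂ * a₂) / (T + 0) - 2 * ((γ₁ * a₁ + γ₂ * a₂) / (T + 1))
        + (γ₁ * a₁ + γ₂ * a₂) / (T + 2) = 0 := by
      linear_combination e0 - 2 * e1 + e2
    field_simp at F
    linarith
  · intro hK
    refine ⟨γ₃, 0, 0, fun lam h hl hh => ?_⟩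
    rw [part1 lam h hl hh, hK]
    ring
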